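/- For all integers t and d with 1 ≤ d ≤ t, we have s(H_{t,d}) ≥ d². -/

import Mathlib

open SimpleGraph

/-- The subgraph of `F` consisting of the edges that receive color `b` under the
edge 2-coloring `c` (colors are `Bool`: `true` = red, `false` = blue). -/
def colorSubgraph {V : Type*} (F : SimpleGraph V) (c : Sym2 V → Bool) (b : Bool) :
    SimpleGraph V where
  Adj x y := F.Adj x y ∧ c s(x, y) = b
  symm := by
    constructor
    intro x y h
    exact ⟨h.1.symm, by rw [Sym2.eq_swap]; exact h.2⟩
  loopless := by
    constructor
    intro x h
    exact F.loopless.irrefl x h.1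

/-- `G` contains a copy of `H`, i.e. a subgraph isomorphic to `H`. -/
def ContainsCopy {V W : Type*} (G : SimpleGraph V) (H : SimpleGraph W) : Prop :=
  ∃ f : W → V, Function.Injective f ∧ ∀ ⦃a b⦄, H.Adj a b → G.Adj (f a) (f b)

/-- The 2-coloring `c` of (the edges of) `F` contains a monochromatic copy of `H`. -/
def HasMonoCopy {V W : Type*} (F : SimpleGraph V) (H : SimpleGraph W)
    (c : Sym2 V → Bool) : Prop :=
  ∃ b : Bool, ContainsCopy (colorSubgraph F c b) H

/-- `F → H`: every 2-coloring of the edges of `F` contains a monochromatic copy of `H`. -/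
def IsRamseyFor {V W : Type*} (F : SimpleGraph V) (H : SimpleGraph W) : Prop :=
  ∀ c : Sym2 V → Bool, HasMonoCopy F H c

/-- `F` is Ramsey `H`-minimal: `F → H` but no proper subgraph of `F` is Ramsey for `H`. -/
def IsRamseyMinimalFor {V W : Type*} (F : SimpleGraph V) (H : SimpleGraph W) : Prop :=
  IsRamseyFor F H ∧ ∀ F' : F.Subgraph, F' ≠ ⊤ → ¬ IsRamseyFor F'.coe H

/-- The degree of the vertex `v` in `G`. -/
noncomputable def degOf {V : Type*} (G : SimpleGraph V) (v : V) : ℕ :=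
  (G.neighborSet v).ncard

/-- The minimum degree `δ(G)`. -/
noncomputable def minDeg {V : Type*} (G : SimpleGraph V) : ℕ :=
  sInf {k | ∃ v, degOf G v = k}

/-- `s(H)`: the minimum of `δ(F)` over all Ramsey `H`-minimal graphs `F`. -/
noncomputable def sVal {W : Type*} (H : SimpleGraph W) : ℕ :=
  sInf {k | ∃ (n : ℕ) (F : SimpleGraph (Fin n)), IsRamseyMinimalFor F H ∧ minDeg F = k}

/-- The graph `H_{t,d}` on `t+1` vertices: a complete graph on the vertices
`0, …, t-1` together with the additional vertex `t` adjacent to exactly the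
`d` vertices `0, …, d-1` of the complete graph. -/
def Htd (t d : ℕ) : SimpleGraph (Fin (t + 1)) where
  Adj x y := x ≠ y ∧ (((x : ℕ) < t ∧ (y : ℕ) < t) ∨ ((x : ℕ) = t ∧ (y : ℕ) < d) ∨
    ((y : ℕ) = t ∧ (x : ℕ) < d))
  symm := by
    constructor
    intro x y h
    exact ⟨h.1.symm, by tauto⟩
  loopless := by
    constructor
    intro x h
    exact h.1 rfl


lemma myRamsey_aux : ∀ (m : ℕ) {α : Type*} [DecidableEq α] (a b : ℕ), a + b ≤ m →
    ∀ (col : α → α → Bool), (∀ x y, col x y = col y x) → ∀ (V : Finset α),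
    Nat.choose (a + b) a ≤ V.card →
    (∃ T ⊆ V, T.card = a ∧ ∀ x ∈ T, ∀ y ∈ T, x ≠ y → col x y = true) ∨
    (∃ T ⊆ V, T.card = b ∧ ∀ x ∈ T, ∀ y ∈ T, x ≠ y → col x y = false) := by
  intro m
  induction m with
  | zero =>
    intro α _ a b hab col _ V _
    left
    exact ⟨∅, Finset.empty_subset _, by simp; omega, by simp⟩
  | succ m ih =>
    intro α _ a b hab col hsym V hV
    rcases Nat.eq_zero_or_pos a with ha | ha
    · exact Or.inl ⟨∅, Finset.empty_subset _, by simp [ha], by simp⟩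
    rcases Nat.eq_zero_or_pos b with hb | hb
    · exact Or.inr ⟨∅, Finset.empty_subset _, by simp [hb], by simp⟩
    -- V is nonempty
    have hVpos : 0 < V.card := lt_of_lt_of_le (Nat.choose_pos (Nat.le_add_right a b)) hV
    obtain ⟨v, hv⟩ := Finset.card_pos.mp hVpos
    set W := V.erase v with hW
    have hWcard : W.card = V.card - 1 := Finset.card_erase_of_mem hv
    set Vt := W.filter (fun x => col v x = true) with hVt
    set Vf := W.filter (fun x => col v x = false) with hVf
    have hsplit : Vt.card + Vf.card = W.card := by
      have h2 : Vf = W.filter (fun x => ¬ (col v x = true)) := by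
        apply Finset.filter_congr; intro x _; simp
      rw [hVt, h2, Finset.card_filter_add_card_filter_not]
    obtain ⟨a', rfl⟩ : ∃ a', a = a' + 1 := ⟨a - 1, by omega⟩
    obtain ⟨b', rfl⟩ : ∃ b', b = b' + 1 := ⟨b - 1, by omega⟩
    have hchoose : Nat.choose (a' + 1 + (b' + 1)) (a' + 1)
        = Nat.choose (a' + (b' + 1)) a' + Nat.choose (a' + (b' + 1)) (a' + 1) := by
      have h3 : a' + 1 + (b' + 1) = (a' + (b' + 1)) + 1 := by omega
      rw [h3, Nat.choose_succ_succ]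
    have hVtW : Vt ⊆ W := Finset.filter_subset _ _
    have hVfW : Vf ⊆ W := Finset.filter_subset _ _
    have hWV : W ⊆ V := Finset.erase_subset _ _
    have hor : Nat.choose (a' + (b' + 1)) a' ≤ Vt.card ∨
        Nat.choose (a' + (b' + 1)) (a' + 1) ≤ Vf.card := by omega
    rcases hor with h | h
    · rcases ih a' (b' + 1) (by omega) col hsym Vt h with ⟨T, hTs, hTc, hTcl⟩ | ⟨T, hTs, hTc, hTcl⟩
      · left
        have hvT : v ∉ T := fun hvt => Finset.notMem_erase v V (hVtW (hTs hvt))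
        refine ⟨insert v T, Finset.insert_subset hv ((hTs.trans hVtW).trans hWV), ?_, ?_⟩
        · rw [Finset.card_insert_of_notMem hvT, hTc]
        · intro x hx y hy hxy
          rcases Finset.mem_insert.mp hx with rfl | hx'
          · rcases Finset.mem_insert.mp hy with rfl | hy'
            · exact absurd rfl hxy
            · exact (Finset.mem_filter.mp (hTs hy')).2
          · rcases Finset.mem_insert.mp hy with rfl | hy'
            · rw [hsym]; exact (Finset.mem_filter.mp (hTs hx')).2
            · exact hTcl x hx' y hy' hxy
      · exact Or.inr ⟨T, (hTs.trans hVtW).trans hWV, hTc, hTcl⟩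
    · rcases ih (a' + 1) b' (by omega) col hsym Vf (by
          have : a' + 1 + b' = a' + (b' + 1) := by omega
          rw [this]; exact h)
        with ⟨T, hTs, hTc, hTcl⟩ | ⟨T, hTs, hTc, hTcl⟩
      · exact Or.inl ⟨T, (hTs.trans hVfW).trans hWV, hTc, hTcl⟩
      · right
        have hvT : v ∉ T := fun hvt => Finset.notMem_erase v V (hVfW (hTs hvt))
        refine ⟨insert v T, Finset.insert_subset hv ((hTs.trans hVfW).trans hWV), ?_, ?_⟩
        · rw [Finset.card_insert_of_notMem hvT, hTc]
        · intro x hx y hy hxy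
          rcases Finset.mem_insert.mp hx with rfl | hx'
          · rcases Finset.mem_insert.mp hy with rfl | hy'
            · exact absurd rfl hxy
            · exact (Finset.mem_filter.mp (hTs hy')).2
          · rcases Finset.mem_insert.mp hy with rfl | hy'
            · rw [hsym]; exact (Finset.mem_filter.mp (hTs hx')).2
            · exact hTcl x hx' y hy' hxy


/-- Partition lemma: any vertex set of size < d² can be split into a part with no
"true-clique" of size d and a part with no "false-clique" of size d. -/
lemma myPartition {α : Type*} [DecidableEq α] (d : ℕ) (hd : 1 ≤ d) (S : Finset α)
    (hS : S.card < d * d) (Rel : Bool → α → α → Prop)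
    (hdisj : ∀ x y, Rel true x y → Rel false x y → False) :
    ∃ P : α → Bool, ∀ b : Bool, ¬ ∃ T : Finset α, T ⊆ S ∧ T.card = d ∧
      (∀ x ∈ T, P x = b) ∧ (∀ x ∈ T, ∀ y ∈ T, x ≠ y → Rel b x y) := by
  classical
  -- families of pairwise disjoint true-cliques of size d inside S
  set Fam : Set (Finset (Finset α)) := {𝔉 | (∀ T ∈ 𝔉, T ⊆ S ∧ T.card = d ∧
      (∀ x ∈ T, ∀ y ∈ T, x ≠ y → Rel true x y)) ∧
      (∀ T₁ ∈ 𝔉, ∀ T₂ ∈ 𝔉, T₁ ≠ T₂ → Disjoint T₁ T₂)} with hFam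
  have hfin : Fam.Finite := by
    apply Set.Finite.subset (Set.finite_mem_finset S.powerset.powerset)
    intro 𝔉 h𝔉
    simp only [Finset.mem_powerset]
    intro T hT
    simp only [Finset.mem_powerset]
    exact (h𝔉.1 T hT).1
  have hne : (∅ : Finset (Finset α)) ∈ Fam := by
    constructor <;> intro T hT <;> simp at hT
  obtain ⟨𝔉, h𝔉, hmax⟩ := Set.Finite.exists_maximalFor Finset.card Fam hfin ⟨∅, hne⟩
  set U : Finset α := 𝔉.biUnion (fun T => T) with hU
  have hUcard : U.card = 𝔉.card * d := by
    rw [hU, Finset.card_biUnion (fun T₁ h1 T₂ h2 hne => h𝔉.2 T₁ h1 T₂ h2 hne)]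
    rw [Finset.sum_congr rfl (fun T hT => (h𝔉.1 T hT).2.1)]
    simp [mul_comm]
  have hUS : U ⊆ S := by
    intro x hx
    obtain ⟨T, hT, hxT⟩ := Finset.mem_biUnion.mp hx
    exact (h𝔉.1 T hT).1 hxT
  have hk : 𝔉.card < d := by
    have := Finset.card_le_card hUS
    nlinarith
  refine ⟨fun x => decide (x ∉ U), ?_⟩
  intro b
  rintro ⟨T, hTS, hTd, hTb, hTcl⟩
  cases b with
  | true =>
    -- T is disjoint from U, a new true-clique: contradiction with maximality
    have hTU : Disjoint T U := by
      rw [Finset.disjoint_left]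
      intro x hxT hxU
      have := hTb x hxT
      simp at this
      exact this hxU
    have hTnot : T ∉ 𝔉 := by
      intro hTmem
      have hsub : T ⊆ U := fun x hx => Finset.mem_biUnion.mpr ⟨T, hTmem, hx⟩
      have : T = ∅ := Finset.eq_empty_of_forall_notMem
        (fun x hx => (Finset.disjoint_left.mp hTU) hx (hsub hx))
      rw [this] at hTd
      simp at hTd; omega
    have hmem' : insert T 𝔉 ∈ Fam := by
      constructor
      · intro T' hT'
        rcases Finset.mem_insert.mp hT' with rfl | h
        · exact ⟨hTS, hTd, hTcl⟩
        · exact h𝔉.1 T' h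
      · intro T₁ h1 T₂ h2 hne12
        rcases Finset.mem_insert.mp h1 with rfl | h1'
        · rcases Finset.mem_insert.mp h2 with rfl | h2'
          · exact absurd rfl hne12
          · exact Finset.disjoint_left.mpr (fun x hx1 hx2 => Finset.disjoint_left.mp hTU hx1
            (Finset.mem_biUnion.mpr ⟨T₂, h2', hx2⟩))
        · rcases Finset.mem_insert.mp h2 with rfl | h2'
          · exact (Finset.disjoint_left.mpr (fun x hx1 hx2 => Finset.disjoint_left.mp hTU hx1
              (Finset.mem_biUnion.mpr ⟨T₁, h1', hx2⟩))).symm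
          · exact h𝔉.2 T₁ h1' T₂ h2' hne12
    have hlt : 𝔉.card ≤ (insert T 𝔉).card := by
      rw [Finset.card_insert_of_notMem hTnot]; omega
    have := hmax hmem' hlt
    rw [Finset.card_insert_of_notMem hTnot] at this
    omega
  | false =>
    -- T ⊆ U; pigeonhole: two elements of T in the same true-clique
    have hTU : T ⊆ U := by
      intro x hx
      have := hTb x hx
      simp at this
      exact this
    have hmaps : ∀ x ∈ T, (if h : ∃ W ∈ 𝔉, x ∈ W then h.choose else ∅) ∈ 𝔉 := by
      intro x hx
      obtain ⟨W, hW, hxW⟩ := Finset.mem_biUnion.mp (hTU hx)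
      rw [dif_pos ⟨W, hW, hxW⟩]
      exact (Exists.choose_spec (⟨W, hW, hxW⟩ : ∃ W ∈ 𝔉, x ∈ W)).1
    have hcard : 𝔉.card < T.card := by omega
    obtain ⟨x, hx, y, hy, hxy, hfxy⟩ :=
      Finset.exists_ne_map_eq_of_card_lt_of_maps_to hcard hmaps
    have hxW : ∃ W ∈ 𝔉, x ∈ W := by
      obtain ⟨W, hW, hxW⟩ := Finset.mem_biUnion.mp (hTU hx); exact ⟨W, hW, hxW⟩
    have hyW : ∃ W ∈ 𝔉, y ∈ W := by
      obtain ⟨W, hW, hxW⟩ := Finset.mem_biUnion.mp (hTU hy); exact ⟨W, hW, hxW⟩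
    rw [dif_pos hxW, dif_pos hyW] at hfxy
    have hxmem : x ∈ hxW.choose := hxW.choose_spec.2
    have hymem : y ∈ hxW.choose := hfxy ▸ hyW.choose_spec.2
    have hclique := (h𝔉.1 _ hxW.choose_spec.1).2.2
    exact hdisj x y (hclique x hxmem y hymem hxy) (hTcl x hx y hy hxy)


section Aux

/-- Ramseyness transfers along graph isomorphisms (given as an equiv of vertex types). -/
lemma myIsRamseyFor_congr {V W X : Type*} {F : SimpleGraph V} {G : SimpleGraph W}
    {H : SimpleGraph X} (e : V ≃ W) (he : ∀ x y, F.Adj x y ↔ G.Adj (e x) (e y))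
    (h : IsRamseyFor F H) : IsRamseyFor G H := by
  intro c
  obtain ⟨b, f, hinj, hadj⟩ := h (fun s => c (Sym2.map e s))
  refine ⟨b, fun x => e (f x), e.injective.comp hinj, ?_⟩
  intro x y hxy
  obtain ⟨h1, h2⟩ := hadj hxy
  exact ⟨(he _ _).mp h1, by simpa [Sym2.map_pair_eq] using h2⟩

/-- The complete graph on `(2*(t+1)).choose (t+1)` vertices is Ramsey for `Htd t d`. -/
lemma myTop_isRamsey (t d : ℕ) :
    IsRamseyFor (⊤ : SimpleGraph (Fin (Nat.choose ((t+1) + (t+1)) (t+1)))) (Htd t d) := by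
  have hN : Nat.choose ((t+1) + (t+1)) (t+1) = Nat.choose ((t+1) + (t+1)) (t+1) := rfl
  set N := Nat.choose ((t+1) + (t+1)) (t+1) with hN2
  intro c
  have hsym : ∀ x y : Fin N, c s(x, y) = c s(y, x) := by
    intro x y; rw [Sym2.eq_swap]
  have := myRamsey_aux ((t+1)+(t+1)) (t+1) (t+1) le_rfl (fun x y => c s(x, y)) hsym
      (Finset.univ : Finset (Fin N)) (by simp [hN2])
  have key : ∃ bb : Bool, ∃ T : Finset (Fin N), T.card = t + 1 ∧
      ∀ x ∈ T, ∀ y ∈ T, x ≠ y → c s(x, y) = bb := by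
    rcases this with ⟨T, _, hc, hcl⟩ | ⟨T, _, hc, hcl⟩
    · exact ⟨true, T, hc, hcl⟩
    · exact ⟨false, T, hc, hcl⟩
  obtain ⟨bb, T, hTc, hTcl⟩ := key
  set f : Fin (t + 1) → Fin N := fun i => (T.equivFin.symm (Fin.cast hTc.symm i) : Fin N) with hf
  have hfinj : Function.Injective f := by
    intro x y hxy
    apply Fin.cast_injective hTc.symm
    apply T.equivFin.symm.injective
    exact Subtype.val_injective hxy
  have hfmem : ∀ i, f i ∈ T := fun i => (T.equivFin.symm (Fin.cast hTc.symm i)).2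
  refine ⟨bb, f, hfinj, ?_⟩
  intro a b hab
  have hne2 : f a ≠ f b := fun h => hab.1 (hfinj h)
  exact ⟨hne2, hTcl _ (hfmem a) _ (hfmem b) hne2⟩

/-- Among Ramsey graphs there is a minimal one. -/
lemma myExists_minimal {X : Type*} (H : SimpleGraph X) :
    ∀ μ n (F : SimpleGraph (Fin n)), n + F.edgeSet.ncard ≤ μ → IsRamseyFor F H →
    ∃ m, ∃ G : SimpleGraph (Fin m), IsRamseyMinimalFor G H := by
  intro μ
  induction μ using Nat.strong_induction_on with
  | _ μ ih =>
    intro n F hμ hF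
    by_cases hmin : ∀ F' : F.Subgraph, F' ≠ ⊤ → ¬ IsRamseyFor F'.coe H
    · exact ⟨n, F, hF, hmin⟩
    push_neg at hmin
    obtain ⟨F', hFne, hF'R⟩ := hmin
    classical
    haveI : Fintype ↑F'.verts := Fintype.ofFinite _
    set m := Fintype.card ↑F'.verts with hm
    set e : ↑F'.verts ≃ Fin m := Fintype.equivFin ↑F'.verts with he
    set G : SimpleGraph (Fin m) :=
      { Adj := fun x y => F'.coe.Adj (e.symm x) (e.symm y)
        symm := ⟨fun x y h => F'.coe.adj_symm h⟩
        loopless := ⟨fun x h => F'.coe.loopless.irrefl _ h⟩ } with hG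
    have hiso : ∀ x y : ↑F'.verts, F'.coe.Adj x y ↔ G.Adj (e x) (e y) := by
      intro x y
      show F'.coe.Adj x y ↔ F'.coe.Adj (e.symm (e x)) (e.symm (e y))
      rw [e.symm_apply_apply, e.symm_apply_apply]
    have hGR : IsRamseyFor G H := myIsRamseyFor_congr e hiso hF'R
    -- edge counting
    set φ : Sym2 (Fin m) → Sym2 (Fin n) :=
      Sym2.map (fun x => (e.symm x : Fin n)) with hφ
    have hφinj : Function.Injective φ := by
      apply Sym2.map.injective
      intro x y hxy
      exact e.symm.injective (Subtype.val_injective hxy)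
    have hφim : φ '' G.edgeSet ⊆ F.edgeSet := by
      rintro s ⟨u, hu, rfl⟩
      induction u with
      | _ x y =>
        rw [SimpleGraph.mem_edgeSet] at hu
        have : F'.Adj (e.symm x) (e.symm y) := hu
        have hFadj : F.Adj (e.symm x) (e.symm y) := F'.adj_sub this
        simpa [hφ, Sym2.map_pair_eq, SimpleGraph.mem_edgeSet] using hFadj
    have hEfin : F.edgeSet.Finite := Set.toFinite _
    have hEle : G.edgeSet.ncard ≤ F.edgeSet.ncard := by
      rw [← Set.ncard_image_of_injective G.edgeSet hφinj]
      exact Set.ncard_le_ncard hφim hEfin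
    -- strict decrease
    have hdec : m + G.edgeSet.ncard < n + F.edgeSet.ncard := by
      by_cases hverts : F'.verts = Set.univ
      · -- same vertices, fewer edges
        have hmn : m = n := by
          rw [hm]
          have h9 : Fintype.card ↑F'.verts = Fintype.card (Fin n) :=
            Fintype.card_congr ((Equiv.setCongr hverts).trans (Equiv.Set.univ _))
          rw [h9, Fintype.card_fin]
        have hadjne : ∃ x y, F.Adj x y ∧ ¬ F'.Adj x y := by
          by_contra hcon
          push_neg at hcon
          apply hFne
          ext x y
          · simp [hverts]
          · simp only [SimpleGraph.Subgraph.top_adj]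
            exact ⟨fun h => F'.adj_sub h, fun h => hcon x y h⟩
        obtain ⟨x, y, hxy, hnxy⟩ := hadjne
        have hmem : s(x, y) ∈ F.edgeSet := hxy
        have hnotmem : s(x, y) ∉ φ '' G.edgeSet := by
          rintro ⟨u, hu, hequ⟩
          induction u with
          | _ a b =>
            rw [SimpleGraph.mem_edgeSet] at hu
            have hadj' : F'.Adj (e.symm a) (e.symm b) := hu
            rw [hφ, Sym2.map_pair_eq] at hequ
            rw [Sym2.eq_iff] at hequ
            rcases hequ with ⟨h1, h2⟩ | ⟨h1, h2⟩
            · exact hnxy (h1 ▸ h2 ▸ hadj')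
            · exact hnxy (h1 ▸ h2 ▸ hadj'.symm)
        have hss : φ '' G.edgeSet ⊂ F.edgeSet := ⟨hφim, fun hsub => hnotmem (hsub hmem)⟩
        have := Set.ncard_lt_ncard hss hEfin
        rw [Set.ncard_image_of_injective G.edgeSet hφinj] at this
        omega
      · -- fewer vertices
        obtain ⟨w, hw⟩ := (Set.ne_univ_iff_exists_notMem _).mp hverts
        have hmn : m < n := by
          have hm' : F'.verts.ncard = m := by
            rw [hm, ← Nat.card_eq_fintype_card, Nat.card_coe_set_eq]
          have hsub : F'.verts ⊂ Set.univ := Set.ssubset_univ_iff.mpr hverts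
          have h5 := Set.ncard_lt_ncard hsub Set.finite_univ
          rw [Set.ncard_univ, Nat.card_eq_fintype_card, Fintype.card_fin] at h5
          omega
        omega
    exact ih (m + G.edgeSet.ncard) (by omega) m G le_rfl hGR

/-- Every vertex of a Ramsey-minimal graph for `Htd t d` has degree at least `d²`. -/
lemma myHtd_adj (t d : ℕ) (x y : Fin (t + 1)) (hne : (x : ℕ) ≠ (y : ℕ))
    (hor : ((x : ℕ) < t ∧ (y : ℕ) < t) ∨ ((x : ℕ) = t ∧ (y : ℕ) < d) ∨
      ((y : ℕ) = t ∧ (x : ℕ) < d)) : (Htd t d).Adj x y :=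
  ⟨fun h => hne (congrArg Fin.val h), hor⟩

lemma mySuccAbove_val {t : ℕ} (p : Fin (t + 1)) (j : Fin t) :
    ((p.succAbove j : Fin (t + 1)) : ℕ) = (j : ℕ) ∨
    ((p.succAbove j : Fin (t + 1)) : ℕ) = (j : ℕ) + 1 := by
  unfold Fin.succAbove
  split
  · left; simp
  · right; simp

lemma myDegree_bound (t d : ℕ) (h1 : 1 ≤ d) (h2 : d ≤ t) {n : ℕ} {F : SimpleGraph (Fin n)}
    (hmin : IsRamseyMinimalFor F (Htd t d)) (v : Fin n) : d * d ≤ degOf F v := by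
  classical
  by_contra hdeg
  push_neg at hdeg
  obtain ⟨hF, hminml⟩ := hmin
  set F' : F.Subgraph := (⊤ : F.Subgraph).deleteVerts {v} with hF'
  have hvnot : v ∉ F'.verts := by
    simp [hF', SimpleGraph.Subgraph.deleteVerts_verts]
  have hFne : F' ≠ ⊤ := by
    intro h
    rw [h] at hvnot
    simp at hvnot
  have memF' : ∀ x : Fin n, x ≠ v → x ∈ F'.verts := by
    intro x hx
    simp [hF', SimpleGraph.Subgraph.deleteVerts_verts, hx]
  have hnR := hminml F' hFne
  rw [IsRamseyFor] at hnR
  push_neg at hnR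
  obtain ⟨c', hc'⟩ := hnR
  -- base coloring on pairs avoiding v
  set cBase : Fin n → Fin n → Bool := fun x y =>
    if h : x ≠ v ∧ y ≠ v then c' s(⟨x, memF' x h.1⟩, ⟨y, memF' y h.2⟩) else true with hcBase
  have hcBval : ∀ (x y : Fin n) (hx : x ≠ v) (hy : y ≠ v),
      cBase x y = c' s(⟨x, memF' x hx⟩, ⟨y, memF' y hy⟩) := by
    intro x y hx hy
    rw [hcBase]
    exact dif_pos ⟨hx, hy⟩
  have hcBsymm : ∀ x y, cBase x y = cBase y x := by
    intro x y
    by_cases h : x ≠ v ∧ y ≠ v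
    · rw [hcBval x y h.1 h.2, hcBval y x h.2 h.1]
      congr 1
      exact Sym2.eq_swap
    · rw [hcBase]
      simp only []
      rw [dif_neg h, dif_neg (fun h' => h ⟨h'.2, h'.1⟩)]
  -- partition the neighborhood
  set S : Finset (Fin n) := (F.neighborSet v).toFinset with hS
  have hScard : S.card < d * d := by
    rw [hS, ← Set.ncard_eq_toFinset_card']
    exact hdeg
  obtain ⟨P, hP⟩ := myPartition d h1 S hScard (fun b x y => F.Adj x y ∧ cBase x y = b)
    (fun x y ha hb => by
      have h1' : cBase x y = true := ha.2
      have h2' : cBase x y = false := hb.2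
      rw [h1'] at h2'
      exact absurd h2' (by simp))
  -- the extended coloring
  set c'' : Fin n → Fin n → Bool := fun x y =>
    if x = v then P y else if y = v then P x else cBase x y with hc''
  have hc''symm : ∀ x y, c'' x y = c'' y x := by
    intro x y
    rw [hc'']
    by_cases hx : x = v <;> by_cases hy : y = v <;>
      simp [hx, hy, hcBsymm x y]
  set c : Sym2 (Fin n) → Bool := Sym2.lift ⟨c'', hc''symm⟩ with hc
  have hcmk : ∀ x y, c s(x, y) = c'' x y := fun x y => Sym2.lift_mk _ _ _
  have hcv : ∀ u : Fin n, c s(v, u) = P u := by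
    intro u
    rw [hcmk, hc'']
    simp
  have hcB : ∀ x y : Fin n, x ≠ v → y ≠ v → c s(x, y) = cBase x y := by
    intro x y hx hy
    rw [hcmk, hc'']
    simp [hx, hy]
  obtain ⟨b, f, hfinj, hfadj⟩ := hF c
  by_cases hvrange : ∃ i₀, f i₀ = v
  · -- v is used by the monochromatic copy
    obtain ⟨i₀, hi₀⟩ := hvrange
    suffices hg : ∃ g : Fin d → Fin (t + 1), Function.Injective g ∧ (∀ i, g i ≠ i₀) ∧
        (∀ i, (Htd t d).Adj i₀ (g i)) ∧ (∀ i j, i ≠ j → (Htd t d).Adj (g i) (g j)) by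
      obtain ⟨g, hginj, hgne, hgadj, hgpair⟩ := hg
      apply hP b
      have hfgne : ∀ i, f (g i) ≠ v := by
        intro i heq
        exact hgne i (hfinj (heq.trans hi₀.symm))
      refine ⟨Finset.image (fun i => f (g i)) Finset.univ, ?_, ?_, ?_, ?_⟩
      · intro x hx
        obtain ⟨i, _, rfl⟩ := Finset.mem_image.mp hx
        have hadj := hfadj (hgadj i)
        rw [hi₀] at hadj
        rw [hS, Set.mem_toFinset]
        exact hadj.1
      · rw [Finset.card_image_of_injective _
            (show Function.Injective (fun i => f (g i)) from fun i j h => hginj (hfinj h)),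
          Finset.card_univ, Fintype.card_fin]
      · intro x hx
        obtain ⟨i, _, rfl⟩ := Finset.mem_image.mp hx
        have hadj := hfadj (hgadj i)
        rw [hi₀] at hadj
        rw [← hcv (f (g i))]
        exact hadj.2
      · intro x hx y hy hxy
        obtain ⟨i, _, rfl⟩ := Finset.mem_image.mp hx
        obtain ⟨j, _, rfl⟩ := Finset.mem_image.mp hy
        have hij : i ≠ j := fun h => hxy (by rw [h])
        have hadj := hfadj (hgpair i j hij)
        refine ⟨hadj.1, ?_⟩
        rw [← hcB _ _ (hfgne i) (hfgne j)]
        exact hadj.2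
    -- construct g
    by_cases htop : (i₀ : ℕ) = t
    · -- v plays the role of the pendant vertex
      have hdt1 : d ≤ t + 1 := by omega
      refine ⟨fun i => Fin.castLE hdt1 i, fun i j hij => Fin.castLE_injective _ hij,
        ?_, ?_, ?_⟩
      · intro i heq
        have h9 := congrArg Fin.val heq
        rw [Fin.coe_castLE] at h9
        have hi := i.isLt
        omega
      · intro i
        have hi := i.isLt
        apply myHtd_adj
        · rw [Fin.coe_castLE]; omega
        · rw [Fin.coe_castLE]; omega
      · intro i j hij
        have hi := i.isLt
        have hj := j.isLt
        have hvne : (i : ℕ) ≠ (j : ℕ) := fun h => hij (Fin.ext h)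
        apply myHtd_adj
        · rw [Fin.coe_castLE, Fin.coe_castLE]; omega
        · rw [Fin.coe_castLE, Fin.coe_castLE]; omega
    · -- v plays the role of a clique vertex
      have hlt : (i₀ : ℕ) < t := by omega
      set g : Fin d → Fin (t + 1) := fun i => i₀.succAbove (Fin.castLE h2 i) with hgdef
      have hval : ∀ i : Fin d, ((g i : Fin (t + 1)) : ℕ) = (i : ℕ) ∨
          ((g i : Fin (t + 1)) : ℕ) = (i : ℕ) + 1 := by
        intro i
        have h9 := mySuccAbove_val i₀ (Fin.castLE h2 i)
        rw [Fin.coe_castLE] at h9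
        exact h9
      have hub : ∀ i : Fin d, ((g i : Fin (t + 1)) : ℕ) < t + 1 := fun i => (g i).isLt
      have hginj : Function.Injective g := by
        intro i j hij
        have h9 : Fin.castLE h2 i = Fin.castLE h2 j :=
          Fin.succAbove_right_injective (p := i₀) hij
        exact Fin.castLE_injective _ h9
      refine ⟨g, hginj, ?_, ?_, ?_⟩
      · intro i
        exact Fin.succAbove_ne i₀ (Fin.castLE h2 i)
      · intro i
        have hvi := hval i
        have hubi := hub i
        have hi := i.isLt
        apply myHtd_adj
        · intro hv2
          exact Fin.succAbove_ne i₀ (Fin.castLE h2 i) (Fin.ext hv2.symm)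
        · omega
      · intro i j hij
        have hvi := hval i
        have hvj := hval j
        have hubi := hub i
        have hubj := hub j
        have hi := i.isLt
        have hj := j.isLt
        have hne2 : ((g i : Fin (t + 1)) : ℕ) ≠ ((g j : Fin (t + 1)) : ℕ) := by
          intro h
          exact hij (hginj (Fin.ext h))
        apply myHtd_adj
        · exact hne2
        · omega
  · -- the copy avoids v : contradiction with c' having no monochromatic copy
    push_neg at hvrange
    apply hc'
    refine ⟨b, fun j => ⟨f j, memF' _ (hvrange j)⟩, ?_, ?_⟩
    · intro x y hxy
      exact hfinj (congrArg Subtype.val hxy)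
    · intro a b' hab
      obtain ⟨h3, h4⟩ := hfadj hab
      constructor
      · show F'.Adj (f a) (f b')
        rw [hF', SimpleGraph.Subgraph.deleteVerts_adj]
        exact ⟨trivial, by simp [hvrange a], trivial, by simp [hvrange b'], h3⟩
      · show c' s(⟨f a, memF' _ (hvrange a)⟩, ⟨f b', memF' _ (hvrange b')⟩) = b
        rw [← hcBval _ _ (hvrange a) (hvrange b'), ← hcB _ _ (hvrange a) (hvrange b')]
        exact h4

end Aux

/-- For all integers `t`, `d` with `1 ≤ d ≤ t`, we have `s(H_{t,d}) ≥ d²`. -/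
theorem stmt_3 (t d : ℕ) (h1 : 1 ≤ d) (h2 : d ≤ t) :
    d ^ 2 ≤ sVal (Htd t d) := by
  have hex : ∃ m, ∃ G : SimpleGraph (Fin m), IsRamseyMinimalFor G (Htd t d) := by
    apply myExists_minimal (Htd t d) _ _ _ le_rfl (myTop_isRamsey t d)
  obtain ⟨m, G, hG⟩ := hex
  have hne : {k | ∃ (n : ℕ) (F : SimpleGraph (Fin n)),
      IsRamseyMinimalFor F (Htd t d) ∧ minDeg F = k}.Nonempty :=
    ⟨minDeg G, m, G, hG, rfl⟩
  obtain ⟨n, F, hF, hFd⟩ := Nat.sInf_mem hne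
  rw [sVal, ← hFd]
  -- the degree set of F is nonempty
  have hn : 0 < n := by
    obtain ⟨b, f, hinj, _⟩ := hF.1 (fun _ => true)
    exact (f 0).pos
  have hDne : {k | ∃ v, degOf F v = k}.Nonempty := ⟨degOf F ⟨0, hn⟩, ⟨0, hn⟩, rfl⟩
  obtain ⟨v, hv⟩ := Nat.sInf_mem hDne
  rw [minDeg, ← hv, pow_two]
  exact myDegree_bound t d h1 h2 hF v
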